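/- Let T be a forest, i.e., an acyclic simple graph on a finite vertex set V, and let H₁ and H₂ be spanning subgraphs of T (subgraphs with vertex set V whose edge sets are subsets of the edge set of T). If deg_{H₁}(v) = deg_{H₂}(v) for every v ∈ V, then H₁ = H₂. In other words, a forest has at most one f-factor for any degree function f : V → ℕ. -/

import Mathlib

open SimpleGraph Finset

/-- An acyclic graph in which no vertex has degree exactly one has no edges at all. -/
lemma acyclic_no_deg_one_eq_bot {V : Type*} [Fintype V] [DecidableEq V]
    (G : SimpleGraph V) [DecidableRel G.Adj] (hG : G.IsAcyclic)
    (hdeg : ∀ v, G.degree v ≠ 1) : G = ⊥ := by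
  classical
  by_contra hne
  -- extract an edge
  obtain ⟨u, v, huv⟩ : ∃ u v, G.Adj u v := by
    by_contra h
    push_neg at h
    exact hne (by ext a b; simp [h a b])
  have hcard : 1 < Fintype.card V :=
    Fintype.one_lt_card_iff_nontrivial.mpr ⟨u, v, huv.ne⟩
  -- set of lengths of paths in G
  set P : ℕ → Prop := fun n => ∃ (a b : V) (w : G.Walk a b), w.IsPath ∧ w.length = n with hP
  let S : Finset ℕ := (Finset.range (Fintype.card V)).filter P
  have h1S : 1 ∈ S := by
    refine Finset.mem_filter.mpr ⟨Finset.mem_range.mpr hcard, ?_⟩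
    exact ⟨u, v, Walk.cons huv Walk.nil, by simp [huv.ne], by simp⟩
  have hSne : S.Nonempty := ⟨1, h1S⟩
  set n := S.max' hSne with hn
  have hnmem : n ∈ S := S.max'_mem hSne
  have hn1 : 1 ≤ n := S.le_max' 1 h1S
  obtain ⟨-, a, b, w, hw, hwl⟩ := Finset.mem_filter.mp hnmem
  have hmax : ∀ m, P m → m ≤ n := by
    intro m hm
    obtain ⟨a', b', w', hw', hwl'⟩ := hm
    have : m ∈ S := Finset.mem_filter.mpr
      ⟨Finset.mem_range.mpr (hwl' ▸ hw'.length_lt), ⟨a', b', w', hw', hwl'⟩⟩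
    exact S.le_max' m this
  -- w is not nil
  cases w with
  | nil => simp at hwl; omega
  | cons h q =>
    rename_i c
    rw [Walk.cons_isPath_iff] at hw
    -- the degree of `a` is at least 2
    have hc : c ∈ G.neighborFinset a := by simp [h]
    have hdeg2 : 1 < (G.neighborFinset a).card := by
      have h1 : 0 < (G.neighborFinset a).card := Finset.card_pos.mpr ⟨c, hc⟩
      have := hdeg a
      rw [SimpleGraph.degree] at this
      omega
    obtain ⟨x, y, hx, hy, hxy⟩ := Finset.one_lt_card_iff.mp hdeg2
    -- pick a neighbor z of a with z ≠ c
    obtain ⟨z, hz, hzc⟩ : ∃ z, G.Adj a z ∧ z ≠ c := by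
      rcases eq_or_ne x c with rfl | hxc
      · exact ⟨y, by simpa using hy, fun hyc => hxy hyc.symm⟩
      · exact ⟨x, by simpa using hx, hxc⟩
    have hza : z ≠ a := hz.ne'
    by_cases hmem : z ∈ (Walk.cons h q).support
    · -- construct a cycle, contradiction
      set q' := (Walk.cons h q).takeUntil z hmem with hq'
      have hq'path : q'.IsPath := ((Walk.cons_isPath_iff h q).mpr hw).takeUntil hmem
      have hecyc : (Walk.cons hz.symm q').IsCycle := by
        rw [Walk.cons_isCycle_iff]
        refine ⟨hq'path, fun hedge => ?_⟩
        have hsub : s(z, a) ∈ (Walk.cons h q).edges :=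
          Walk.edges_takeUntil_subset _ hmem hedge
        rw [Walk.edges_cons, List.mem_cons] at hsub
        rcases hsub with heq | hmem'
        · rw [Sym2.eq_iff] at heq
          rcases heq with ⟨h1, h2⟩ | ⟨h1, h2⟩
          · exact hza h1
          · exact hzc h1
        · exact hw.2 (q.snd_mem_support_of_mem_edges hmem')
      exact hG _ hecyc
    · -- extend the path, contradiction with maximality
      have hpath : (Walk.cons hz.symm (Walk.cons h q)).IsPath :=
        (Walk.cons_isPath_iff _ _).mpr ⟨(Walk.cons_isPath_iff h q).mpr hw, hmem⟩
      have : n + 1 ≤ n := hmax (n + 1)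
        ⟨z, b, Walk.cons hz.symm (Walk.cons h q), hpath, by simp [hwl]⟩
      omega

/-- A forest has at most one `f`-factor: if `T` is an acyclic simple graph on a finite
vertex set and `H₁, H₂` are spanning subgraphs of `T` (i.e. `H₁ ≤ T` and `H₂ ≤ T` as
simple graphs on the same vertex set) with the same degree at every vertex, then
`H₁ = H₂`. -/
theorem forest_f_factor_unique {V : Type*} [Fintype V] [DecidableEq V]
    (T H₁ H₂ : SimpleGraph V) [DecidableRel H₁.Adj] [DecidableRel H₂.Adj]
    (hT : T.IsAcyclic) (h₁ : H₁ ≤ T) (h₂ : H₂ ≤ T)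
    (hdeg : ∀ v, H₁.degree v = H₂.degree v) : H₁ = H₂ := by
  classical
  -- the symmetric difference graph
  set D : SimpleGraph V :=
    { Adj := fun a b => (H₁.Adj a b ∧ ¬H₂.Adj a b) ∨ (H₂.Adj a b ∧ ¬H₁.Adj a b)
      symm := by
        refine ⟨fun a b hab => ?_⟩
        rcases hab with ⟨h1, h2⟩ | ⟨h1, h2⟩
        · exact Or.inl ⟨h1.symm, fun hh => h2 hh.symm⟩
        · exact Or.inr ⟨h1.symm, fun hh => h2 hh.symm⟩
      loopless := by
        refine ⟨fun a hab => ?_⟩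
        rcases hab with ⟨h1, _⟩ | ⟨h1, _⟩ <;> exact h1.ne rfl } with hD
  haveI : DecidableRel D.Adj := fun a b =>
    inferInstanceAs (Decidable ((H₁.Adj a b ∧ ¬H₂.Adj a b) ∨ (H₂.Adj a b ∧ ¬H₁.Adj a b)))
  have hDle : D ≤ T := by
    intro a b hab
    rcases hab with ⟨hh, -⟩ | ⟨hh, -⟩
    · exact h₁ hh
    · exact h₂ hh
  have hDac : D.IsAcyclic := by
    intro v c hc
    exact hT (c.transfer T (fun e he => (SimpleGraph.edgeSet_mono hDle)
      (c.edges_subset_edgeSet he))) (hc.transfer _)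
  have hbot : D = ⊥ := by
    apply acyclic_no_deg_one_eq_bot D hDac
    intro v
    have hnf : D.neighborFinset v =
        (H₁.neighborFinset v \ H₂.neighborFinset v) ∪
        (H₂.neighborFinset v \ H₁.neighborFinset v) := by
      ext a
      simp only [mem_neighborFinset, Finset.mem_union, Finset.mem_sdiff]
      exact Iff.rfl
    have hdisj : Disjoint (H₁.neighborFinset v \ H₂.neighborFinset v)
        (H₂.neighborFinset v \ H₁.neighborFinset v) :=
      Finset.disjoint_left.mpr (by
        intro a ha hb
        exact (Finset.mem_sdiff.mp hb).2 (Finset.mem_sdiff.mp ha).1)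
    have hcc : (H₁.neighborFinset v \ H₂.neighborFinset v).card =
        (H₂.neighborFinset v \ H₁.neighborFinset v).card := by
      exact Finset.card_sdiff_comm (hdeg v)
    have : D.degree v = 2 * (H₁.neighborFinset v \ H₂.neighborFinset v).card := by
      rw [SimpleGraph.degree, hnf, Finset.card_union_of_disjoint hdisj, ← hcc, two_mul]
    omega
  ext a b
  have : ¬ D.Adj a b := by rw [hbot]; exact id
  change ¬((H₁.Adj a b ∧ ¬H₂.Adj a b) ∨ (H₂.Adj a b ∧ ¬H₁.Adj a b)) at this
  tauto
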